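/- For every word w over Σ, the number of arches in the arch factorization of w equals the universality index ι(w). -/

import Mathlib

open List

section Defs

variable {α : Type*}

/-- A word `w` is `k`-universal if every word of length at most `k` is a subsequence of `w`. -/
def IsKUniversal [Fintype α] (k : ℕ) (w : List α) : Prop :=
  ∀ u : List α, u.length ≤ k → u.Sublist w

/-- The universality index `ι(w)`: the largest `k` such that `w` is `k`-universal. -/
noncomputable def univIndex [Fintype α] (w : List α) : ℕ :=
  sSup {k | IsKUniversal k w}

/-- `c`-fold concatenation (power) of a word. -/
def wpow (u : List α) (c : ℕ) : List α := (List.replicate c u).flatten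

/-- Auxiliary (fuelled) computation of the arch factorization: returns the list of
arches and the rest. Each arch is the shortest prefix of the remaining suffix
containing every letter of the alphabet. -/
noncomputable def archFactAux [Fintype α] [DecidableEq α] :
    ℕ → List α → List (List α) × List α
  | 0, w => ([], w)
  | fuel + 1, w =>
    if Finset.univ ⊆ w.toFinset then
      let n := sInf {n | Finset.univ ⊆ (w.take n).toFinset}
      let p := archFactAux fuel (w.drop n)
      (w.take n :: p.1, p.2)
    else ([], w)

/-- The arch factorization of `w`: the list of arches together with the rest. -/
noncomputable def archFact [Fintype α] [DecidableEq α] (w : List α) :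
    List (List α) × List α :=
  archFactAux w.length w

/-- `γ(w)`: the distinct letters of `w` in order of their first occurrence. -/
def gammaWord [DecidableEq α] (w : List α) : List α := w.reverse.dedup.reverse

/-- The suffix of `w` strictly after the first occurrence of the letter `a`. -/
def afterFirst [DecidableEq α] (a : α) (w : List α) : List α :=
  w.drop (w.idxOf a + 1)

/-- `ι_a(w)`: the universality index of the suffix of `w` after the first occurrence of `a`. -/
noncomputable def iotaLetter [Fintype α] [DecidableEq α] (a : α) (w : List α) : ℕ :=
  univIndex (afterFirst a w)

/-- `R_a(w)`: the alphabet of the rest of the arch factorization of the suffix of `w`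
after the first occurrence of `a`. -/
noncomputable def restLetter [Fintype α] [DecidableEq α] (a : α) (w : List α) : Finset α :=
  ((archFact (afterFirst a w)).2).toFinset

/-- `Subseq_k(w)`: the set of subsequences of `w` of length at most `k`. -/
def subseqK (k : ℕ) (w : List α) : Set (List α) :=
  {u | u.length ≤ k ∧ u.Sublist w}

/-- Simon's congruence `u ∼_k v`. -/
def SimonCongr (k : ℕ) (u v : List α) : Prop := subseqK k u = subseqK k v

/-- Applying a substitution `h` to a pattern: replace each variable occurrence by its
image and leave terminal letters unchanged. -/
def applySub {X : Type*} (h : X → List α) (p : List (α ⊕ X)) : List α :=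
  p.flatMap (Sum.elim (fun a => [a]) h)

/-- A permutation word of the alphabet: every letter occurs exactly once. -/
def IsPermWord [DecidableEq α] (γ : List α) : Prop :=
  ∀ a : α, γ.count a = 1

end Defs

open List

section Proof
variable {α : Type*} [Fintype α] [DecidableEq α] [Nonempty α]

lemma isK_zero (w : List α) : IsKUniversal 0 w := by
  intro u hu
  have : u = [] := List.length_eq_zero_iff.mp (Nat.le_zero.mp hu)
  simp [this]

lemma univSet_bdd (w : List α) : BddAbove {k | IsKUniversal k w} := by
  refine ⟨w.length, fun k hk => ?_⟩
  have a := Classical.arbitrary α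
  have := hk (List.replicate k a) (by simp)
  simpa using this.length_le

lemma univIndex_mem (w : List α) : IsKUniversal (univIndex w) w :=
  Nat.sSup_mem ⟨0, isK_zero w⟩ (univSet_bdd w)

lemma le_univIndex {k : ℕ} {w : List α} (h : IsKUniversal k w) : k ≤ univIndex w :=
  le_csSup (univSet_bdd w) h

lemma univIndex_eq_zero {w : List α} (h : ¬ Finset.univ ⊆ w.toFinset) :
    univIndex w = 0 := by
  obtain ⟨a, ha⟩ : ∃ a : α, a ∉ w := by
    by_contra hc; push_neg at hc
    exact h (fun x _ => List.mem_toFinset.mpr (hc x))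
  by_contra h0
  have h1 : 1 ≤ univIndex w := Nat.one_le_iff_ne_zero.mpr h0
  have := univIndex_mem w [a] (by simpa using h1)
  exact ha (List.singleton_sublist.mp this)

lemma cons_sublist_of_not_mem {a : α} {u l₁ l₂ : List α}
    (h : (a :: u).Sublist (l₁ ++ l₂)) (ha : a ∉ l₁) : (a :: u).Sublist l₂ := by
  induction l₁ with
  | nil => simpa using h
  | cons c l₁ ih =>
    simp only [List.mem_cons, not_or] at ha
    cases h with
    | cons _ h' => exact ih h' ha.2
    | cons_cons _ h' => exact absurd rfl ha.1

end Proof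
set_option linter.unusedSectionVars false

section Proof2
variable {α : Type*} [Fintype α] [DecidableEq α] [Nonempty α]

lemma not_univ_subset_nil : ¬ Finset.univ ⊆ ([] : List α).toFinset := fun hc => by
  have := hc (Finset.mem_univ (Classical.arbitrary α)); simp at this

lemma arch_n_pos {w : List α} (h : Finset.univ ⊆ w.toFinset) :
    1 ≤ sInf {n | Finset.univ ⊆ (w.take n).toFinset} ∧
    sInf {n | Finset.univ ⊆ (w.take n).toFinset} ≤ w.length ∧
    Finset.univ ⊆ (w.take (sInf {n | Finset.univ ⊆ (w.take n).toFinset})).toFinset := by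
  have hmemL : w.length ∈ {n | Finset.univ ⊆ (w.take n).toFinset} := by
    show Finset.univ ⊆ (w.take w.length).toFinset
    rw [List.take_length]; exact h
  have hne : {n | Finset.univ ⊆ (w.take n).toFinset}.Nonempty := ⟨_, hmemL⟩
  refine ⟨?_, Nat.sInf_le hmemL, Nat.sInf_mem hne⟩
  rcases Nat.eq_zero_or_pos (sInf {n | Finset.univ ⊆ (w.take n).toFinset}) with h0 | h1
  · exfalso
    have := Nat.sInf_mem hne
    rw [h0] at this
    simp only [Set.mem_setOf_eq, List.take_zero] at this
    exact not_univ_subset_nil this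
  · exact h1

lemma archFactAux_fuel : ∀ N fuel (w : List α), w.length ≤ N → w.length ≤ fuel →
    archFactAux fuel w = archFactAux w.length w := by
  intro N
  induction N with
  | zero =>
    intro fuel w hN _
    have hw : w = [] := List.length_eq_zero_iff.mp (Nat.le_zero.mp hN)
    subst hw
    cases fuel with
    | zero => rfl
    | succ f =>
      show archFactAux (f+1) [] = archFactAux 0 ([] : List α)
      simp only [archFactAux]
      rw [if_neg not_univ_subset_nil]
  | succ N ih =>
    intro fuel w hN hf
    by_cases h : Finset.univ ⊆ w.toFinset
    · obtain ⟨hn1, hnle, _⟩ := arch_n_pos h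
      set n := sInf {n | Finset.univ ⊆ (w.take n).toFinset} with hn
      have hwpos : 1 ≤ w.length := le_trans hn1 hnle
      obtain ⟨m, hm⟩ : ∃ m, w.length = m + 1 := ⟨w.length - 1, by omega⟩
      obtain ⟨f, hfe⟩ : ∃ f, fuel = f + 1 := ⟨fuel - 1, by omega⟩
      have hdl : (w.drop n).length = w.length - n := List.length_drop
      have h1 : archFactAux fuel w =
          (w.take n :: (archFactAux f (w.drop n)).1, (archFactAux f (w.drop n)).2) := by
        rw [hfe]; simp only [archFactAux]; rw [if_pos h]
      have h2 : archFactAux w.length w =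
          (w.take n :: (archFactAux m (w.drop n)).1, (archFactAux m (w.drop n)).2) := by
        rw [hm]; simp only [archFactAux]; rw [if_pos h]
      rw [h1, h2, ih f (w.drop n) (by omega) (by omega), ih m (w.drop n) (by omega) (by omega)]
    · cases hfuel : fuel with
      | zero =>
        have : w.length = 0 := by omega
        rw [this]
      | succ f =>
        cases hwl : w.length with
        | zero =>
          have hw : w = [] := List.length_eq_zero_iff.mp hwl
          subst hw
          simp only [archFactAux, List.length_nil]
          rw [if_neg not_univ_subset_nil]
        | succ m =>
          show archFactAux (f+1) w = archFactAux (m+1) w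
          simp only [archFactAux]
          rw [if_neg h, if_neg h]

lemma archFact_neg {w : List α} (h : ¬ Finset.univ ⊆ w.toFinset) :
    archFact w = ([], w) := by
  rw [archFact]
  cases hwl : w.length with
  | zero => rfl
  | succ m =>
    show archFactAux (m+1) w = ([], w)
    simp only [archFactAux]
    rw [if_neg h]

lemma archFact_pos {w : List α} (h : Finset.univ ⊆ w.toFinset) :
    archFact w = (w.take (sInf {n | Finset.univ ⊆ (w.take n).toFinset}) ::
      (archFact (w.drop (sInf {n | Finset.univ ⊆ (w.take n).toFinset}))).1,
      (archFact (w.drop (sInf {n | Finset.univ ⊆ (w.take n).toFinset}))).2) := by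
  obtain ⟨hn1, hnle, _⟩ := arch_n_pos h
  set n := sInf {n | Finset.univ ⊆ (w.take n).toFinset} with hn
  have hwpos : 1 ≤ w.length := le_trans hn1 hnle
  obtain ⟨m, hm⟩ : ∃ m, w.length = m + 1 := ⟨w.length - 1, by omega⟩
  have hdl : (w.drop n).length = w.length - n := List.length_drop
  have hrec : archFactAux m (w.drop n) = archFact (w.drop n) := by
    rw [archFact]
    exact archFactAux_fuel m m (w.drop n) (by omega) (by omega)
  rw [archFact, hm]
  show archFactAux (m+1) w = _
  simp only [archFactAux]
  rw [if_pos h]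
  rw [show sInf {n | Finset.univ ⊆ (List.take n w).toFinset} = n from hn.symm, hrec]

end Proof2
section Proof3
variable {α : Type*} [Fintype α] [DecidableEq α] [Nonempty α]

lemma univIndex_step {w : List α} (h : Finset.univ ⊆ w.toFinset) :
    univIndex w = univIndex (w.drop (sInf {n | Finset.univ ⊆ (w.take n).toFinset})) + 1 := by
  obtain ⟨hn1, hnle, hmem⟩ := arch_n_pos h
  set n := sInf {n | Finset.univ ⊆ (w.take n).toFinset} with hn
  -- the letter at position n-1 does not occur earlier
  have hlt : n - 1 < w.length := by omega
  set b := w[n-1] with hb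
  have hbnot : b ∉ w.take (n-1) := by
    have hminset : ¬ Finset.univ ⊆ (w.take (n-1)).toFinset := by
      have : n - 1 ∉ {n | Finset.univ ⊆ (w.take n).toFinset} :=
        Nat.notMem_of_lt_sInf (by omega)
      exact this
    obtain ⟨c, -, hc⟩ := Finset.not_subset.mp hminset
    have hcmem : c ∈ w.take n := List.mem_toFinset.mp (hmem (Finset.mem_univ c))
    have htake : w.take n = w.take (n-1) ++ [b] := by
      have h' : w.take (n-1+1) = w.take (n-1) ++ w[n-1]?.toList := List.take_succ
      rw [List.getElem?_eq_getElem hlt, show n-1+1 = n by omega, Option.toList_some] at h'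
      exact h'
    rw [htake, List.mem_append] at hcmem
    rcases hcmem with h1 | h2
    · exact absurd (List.mem_toFinset.mpr h1) hc
    · simp at h2; subst h2; exact fun hb' => hc (List.mem_toFinset.mpr hb')
  have hdropeq : w.drop (n-1) = b :: w.drop n := by
    have := List.drop_eq_getElem_cons hlt
    simpa [show n - 1 + 1 = n by omega] using this
  -- forward: k-universal on drop gives (k+1)-universal on w
  have fwd : ∀ k, IsKUniversal k (w.drop n) → IsKUniversal (k+1) w := by
    intro k hk u hu
    cases u with
    | nil => exact List.nil_sublist w
    | cons a u' =>
      have ha : a ∈ w.take n := List.mem_toFinset.mp (hmem (Finset.mem_univ a))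
      have h1 : [a].Sublist (w.take n) := List.singleton_sublist.mpr ha
      have h2 : u'.Sublist (w.drop n) := hk u' (by simp at hu; omega)
      have := h1.append h2
      rw [List.take_append_drop] at this
      exact this
  have bwd : ∀ k, IsKUniversal (k+1) w → IsKUniversal k (w.drop n) := by
    intro k hk u hu
    have h1 : (b :: u).Sublist w := hk (b :: u) (by simp; omega)
    rw [← List.take_append_drop (n-1) w, hdropeq] at h1
    have h2 := cons_sublist_of_not_mem h1 hbnot
    exact List.cons_sublist_cons.mp h2
  have hle1 : univIndex (w.drop n) + 1 ≤ univIndex w :=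
    le_univIndex (fwd _ (univIndex_mem _))
  have hge : univIndex w ≤ univIndex (w.drop n) + 1 := by
    have hM : 1 ≤ univIndex w := by omega
    have : IsKUniversal ((univIndex w - 1) + 1) w := by
      rw [show univIndex w - 1 + 1 = univIndex w by omega]
      exact univIndex_mem w
    have := le_univIndex (bwd _ this)
    omega
  omega

lemma stmt17_aux : ∀ N (w : List α), w.length ≤ N →
    (archFact w).1.length = univIndex w := by
  intro N
  induction N with
  | zero =>
    intro w hw
    have hwnil : w = [] := List.length_eq_zero_iff.mp (Nat.le_zero.mp hw)
    subst hwnil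
    rw [archFact_neg not_univ_subset_nil, univIndex_eq_zero not_univ_subset_nil]
    rfl
  | succ N ih =>
    intro w hw
    by_cases h : Finset.univ ⊆ w.toFinset
    · obtain ⟨hn1, hnle, -⟩ := arch_n_pos h
      rw [archFact_pos h, univIndex_step h]
      simp only [List.length_cons, Nat.add_right_cancel_iff]
      exact ih _ (by rw [List.length_drop]; omega)
    · rw [archFact_neg h, univIndex_eq_zero h]
      rfl

end Proof3

/-- the number of arches in the arch factorization of `w` equals the
universality index `ι(w)`. -/
theorem stmt17 {α : Type*} [Fintype α] [DecidableEq α] [Nonempty α]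
    (w : List α) : (archFact w).1.length = univIndex w := by
  exact stmt17_aux w.length w le_rfl
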